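/- Let U be a β×β matrix over R all of whose entries have total degree at most δ. Define submodules L_j ⊆ R^β by L₀ = R^β and, for j ≥ 0, L_{j+1} is the smallest submodule W with U·L_j ⊆ W^{[p]} (where U·L_j is the submodule generated by {U·w : w ∈ L_j}). Then for every e ≥ 1 the submodule L_e is generated by vectors all of whose entries have total degree at most δ/(p−1); that is, L_e is generated by its elements v satisfying (p−1)·deg(v_i) ≤ δ for every coordinate i. -/

import Mathlib

/-- The bracket power `L^{[q]}` of a submodule `L ⊆ T^β`: the submodule generated by the
entrywise `q`-th powers `v^{[q]}` of the vectors `v ∈ L`. -/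
def bracketPower {T : Type*} [CommRing T] {β : ℕ}
    (q : ℕ) (L : Submodule T (Fin β → T)) : Submodule T (Fin β → T) :=
  Submodule.span T ((fun v : Fin β → T => fun i => (v i) ^ q) '' (L : Set (Fin β → T)))

open MvPolynomial

section Scalar
variable {K : Type*} [Field K] {p : ℕ} [CharP K p] [hp : Fact p.Prime]

/-- partial p-th root -/
noncomputable def pr (p : ℕ) {K : Type*} [Field K] (x : K) : K := by
  classical exact if h : ∃ b : K, b ^ p = x then h.choose else 0

lemma pr_spec {x : K} (h : ∃ b : K, b ^ p = x) : (pr p x) ^ p = x := by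
  classical
  rw [pr]
  simp only [dif_pos h]
  exact h.choose_spec

lemma pow_p_inj {a b : K} (hab : a ^ p = b ^ p) : a = b :=
  frobenius_inj K p hab

/-- the subfield of p-th powers -/
noncomputable def Fp (K : Type*) [Field K] (p : ℕ) [CharP K p] [Fact p.Prime] : Subfield K :=
  (frobenius K p).fieldRange

lemma mem_Fp_iff {x : K} : x ∈ Fp K p ↔ ∃ b : K, b ^ p = x := by
  simp [Fp, RingHom.mem_fieldRange, frobenius_def]

lemma pr_of_mem {x : K} (h : x ∈ Fp K p) : (pr p x) ^ p = x :=
  pr_spec (mem_Fp_iff.mp h)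

lemma pr_pow (a : K) : pr p (a ^ p) = a :=
  pow_p_inj (pr_spec ⟨a, rfl⟩)

lemma pr_zero : pr p (0 : K) = 0 := by
  have := pr_pow (p := p) (0 : K)
  rwa [zero_pow hp.out.ne_zero] at this

lemma pr_add {x y : K} (hx : x ∈ Fp K p) (hy : y ∈ Fp K p) :
    pr p (x + y) = pr p x + pr p y := by
  apply pow_p_inj (p := p)
  rw [add_pow_char, pr_of_mem hx, pr_of_mem hy, pr_of_mem (add_mem hx hy)]

lemma pr_mul {x y : K} (hx : x ∈ Fp K p) (hy : y ∈ Fp K p) :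
    pr p (x * y) = pr p x * pr p y := by
  apply pow_p_inj (p := p)
  rw [mul_pow, pr_of_mem hx, pr_of_mem hy, pr_of_mem (mul_mem hx hy)]

/-- index type for the basis of K over its subfield of p-th powers -/
noncomputable abbrev PIdx (K : Type*) [Field K] (p : ℕ) [CharP K p] [Fact p.Prime] :=
  ↑(Module.Basis.ofVectorSpaceIndex ↥(Fp K p) K)

noncomputable abbrev PBasis (K : Type*) [Field K] (p : ℕ) [CharP K p] [Fact p.Prime] :
    Module.Basis (PIdx K p) ↥(Fp K p) K := Module.Basis.ofVectorSpace ↥(Fp K p) K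

/-- coordinates of an element of K w.r.t. the basis of K over the p-th powers,
with the p-th root taken -/
noncomputable def crd (c : K) (l : PIdx K p) : K :=
  pr p ((PBasis K p).repr c l : K)

lemma crd_mem (c : K) (l : PIdx K p) : (((PBasis K p).repr c l : K)) ∈ Fp K p :=
  ((PBasis K p).repr c l).2

lemma crd_zero (l : PIdx K p) : crd (0:K) l = 0 := by
  rw [crd, map_zero]
  simpa using pr_zero (p := p) (K := K)

lemma crd_add (c d : K) (l : PIdx K p) : crd (c + d) l = crd c l + crd d l := by
  rw [crd, map_add]
  have h : ((((PBasis K p).repr c + (PBasis K p).repr d)) l : K)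
      = ((PBasis K p).repr c l : K) + ((PBasis K p).repr d l : K) := by
    simp
  rw [h]
  exact pr_add (crd_mem _ _) (crd_mem _ _)

lemma crd_mul_pow (a c : K) (l : PIdx K p) : crd (a ^ p * c) l = a * crd c l := by
  have hm : a ^ p ∈ Fp K p := mem_Fp_iff.mpr ⟨a, rfl⟩
  have h1 : a ^ p * c = (⟨a ^ p, hm⟩ : Fp K p) • c := rfl
  rw [crd, h1, map_smul]
  have h2 : (((⟨a ^ p, hm⟩ : Fp K p) • (PBasis K p).repr c) l : K)
      = a ^ p * ((PBasis K p).repr c l : K) := by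
    simp [Subfield.smul_def]
  rw [h2, pr_mul hm (crd_mem _ _), pr_pow]
  rfl

lemma crd_not_mem {c : K} {l : PIdx K p} (h : l ∉ ((PBasis K p).repr c).support) :
    crd c l = 0 := by
  rw [crd, Finsupp.notMem_support_iff.mp h]
  simpa using pr_zero (p := p) (K := K)

/-- reconstruction: `c` is the sum over any superset of the support -/
lemma sum_crd_pow {c : K} {S : Finset (PIdx K p)}
    (hS : ((PBasis K p).repr c).support ⊆ S) :
    ∑ l ∈ S, (crd c l) ^ p * (l : K) = c := by
  classical
  have h0 : ∀ l ∈ S, l ∉ ((PBasis K p).repr c).support →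
      (crd c l) ^ p * (l : K) = 0 := by
    intro l _ hl
    rw [crd_not_mem hl, zero_pow hp.out.ne_zero, zero_mul]
  rw [← Finset.sum_subset hS h0]
  have h2 := (PBasis K p).linearCombination_repr c
  rw [Finsupp.linearCombination_apply, Finsupp.sum] at h2
  refine Eq.trans (Finset.sum_congr rfl ?_) h2
  intro l _
  rw [crd, pr_of_mem (crd_mem _ _), Module.Basis.ofVectorSpace_apply_self]
  rfl

end Scalar

section Psi
variable {K : Type*} [Field K] {p : ℕ} [CharP K p] [hp : Fact p.Prime] {n : ℕ}

/-- residue of an exponent mod p -/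
noncomputable def res (p : ℕ) (m : Fin n →₀ ℕ) : Fin n →₀ ℕ := m.mapRange (· % p) (Nat.zero_mod p)

/-- quotient of an exponent by p -/
noncomputable def quo (p : ℕ) (m : Fin n →₀ ℕ) : Fin n →₀ ℕ := m.mapRange (· / p) (Nat.zero_div p)

omit [CharP K p] hp in
lemma res_apply (m : Fin n →₀ ℕ) (j) : res p m j = m j % p := rfl

omit [CharP K p] hp in
lemma quo_apply (m : Fin n →₀ ℕ) (j) : quo p m j = m j / p := rfl

omit [CharP K p] hp in
lemma res_add_quo (m : Fin n →₀ ℕ) : res p m + p • quo p m = m := by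
  ext j
  simp only [Finsupp.add_apply, Finsupp.smul_apply, res_apply, quo_apply, smul_eq_mul]
  exact Nat.mod_add_div _ _

lemma res_lt (m : Fin n →₀ ℕ) (j : Fin n) : res p m j < p :=
  Nat.mod_lt _ hp.out.pos

lemma res_of_lt {μ ν : Fin n →₀ ℕ} (hμ : ∀ j, μ j < p) : res p (μ + p • ν) = μ := by
  ext j
  simp only [res_apply, Finsupp.add_apply, Finsupp.smul_apply, smul_eq_mul]
  rw [Nat.add_mul_mod_self_left, Nat.mod_eq_of_lt (hμ j)]

lemma quo_of_lt {μ ν : Fin n →₀ ℕ} (hμ : ∀ j, μ j < p) : quo p (μ + p • ν) = ν := by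
  ext j
  simp only [quo_apply, Finsupp.add_apply, Finsupp.smul_apply, smul_eq_mul]
  rw [Nat.add_mul_div_left _ _ hp.out.pos, Nat.div_eq_of_lt (hμ j), zero_add]

/-- the component of `f` along the basis element `l·x^μ` in the decomposition of `R`
over the `p`-th powers subring -/
noncomputable def Psi (μ : Fin n →₀ ℕ) (l : PIdx K p) (f : MvPolynomial (Fin n) K) :
    MvPolynomial (Fin n) K :=
  ∑ ν ∈ f.support.image (quo p), monomial ν (crd (coeff (μ + p • ν) f) l)

lemma coeff_Psi {μ : Fin n →₀ ℕ} (hμ : ∀ j, μ j < p) (l : PIdx K p)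
    (f : MvPolynomial (Fin n) K) (ν : Fin n →₀ ℕ) :
    coeff ν (Psi μ l f) = crd (coeff (μ + p • ν) f) l := by
  classical
  rw [Psi]
  simp only [MvPolynomial.coeff_sum, coeff_monomial]
  rw [Finset.sum_ite_eq' (f.support.image (quo p)) ν (fun ν' => crd (coeff (μ + p • ν') f) l)]
  split_ifs with h
  · rfl
  · by_cases hc : coeff (μ + p • ν) f = 0
    · rw [hc, crd_zero]
    · exfalso
      apply h
      refine Finset.mem_image.mpr ⟨μ + p • ν, mem_support_iff.mpr hc, quo_of_lt hμ⟩

lemma Psi_add {μ : Fin n →₀ ℕ} (hμ : ∀ j, μ j < p) (l : PIdx K p)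
    (f g : MvPolynomial (Fin n) K) : Psi μ l (f + g) = Psi μ l f + Psi μ l g := by
  ext ν
  simp only [coeff_Psi hμ, coeff_add, crd_add]

lemma Psi_zero {μ : Fin n →₀ ℕ} (hμ : ∀ j, μ j < p) (l : PIdx K p) :
    Psi μ l (0 : MvPolynomial (Fin n) K) = 0 := by
  ext ν
  simp only [coeff_Psi hμ, coeff_zero, crd_zero]

lemma Psi_sum {μ : Fin n →₀ ℕ} (hμ : ∀ j, μ j < p) (l : PIdx K p)
    {α : Type*} (s : Finset α) (f : α → MvPolynomial (Fin n) K) :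
    Psi μ l (∑ a ∈ s, f a) = ∑ a ∈ s, Psi μ l (f a) := by
  classical
  induction s using Finset.induction_on with
  | empty => simpa using Psi_zero hμ l
  | insert _ _ hnotmem ih =>
    rw [Finset.sum_insert hnotmem, Finset.sum_insert hnotmem, Psi_add hμ, ih]

lemma Psi_monomial {μ : Fin n →₀ ℕ} (hμ : ∀ j, μ j < p) (l : PIdx K p)
    (m : Fin n →₀ ℕ) (c : K) :
    Psi μ l (monomial m c)
      = if μ = res p m then monomial (quo p m) (crd c l) else 0 := by
  classical
  ext ν
  rw [coeff_Psi hμ]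
  by_cases h1 : μ = res p m
  · rw [if_pos h1, coeff_monomial, coeff_monomial]
    by_cases h3 : quo p m = ν
    · have hm : m = μ + p • ν := by
        conv_lhs => rw [← res_add_quo (p := p) m, h3]
        rw [h1]
      rw [if_pos hm, if_pos h3]
    · have hm : ¬ (m = μ + p • ν) := fun hh => h3 (by rw [hh, quo_of_lt hμ])
      rw [if_neg hm, if_neg h3, crd_zero]
  · rw [if_neg h1, coeff_zero, coeff_monomial]
    have hm : ¬ (m = μ + p • ν) := fun hh => h1 (by rw [hh, res_of_lt hμ])
    rw [if_neg hm, crd_zero]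

lemma Psi_mul_pow {μ : Fin n →₀ ℕ} (hμ : ∀ j, μ j < p) (l : PIdx K p)
    (f g : MvPolynomial (Fin n) K) :
    Psi μ l (f * g ^ p) = Psi μ l f * g := by
  classical
  induction g using MvPolynomial.induction_on' with
  | monomial m a =>
    ext ν
    rw [monomial_pow, coeff_Psi hμ, MvPolynomial.coeff_mul_monomial',
      MvPolynomial.coeff_mul_monomial', coeff_Psi hμ]
    by_cases h : m ≤ ν
    · have hle : p • m ≤ μ + p • ν := by
        rw [Finsupp.le_def]
        intro j
        have hj : m j ≤ ν j := Finsupp.le_def.mp h j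
        simp only [Finsupp.smul_apply, smul_eq_mul, Finsupp.add_apply]
        have : p * m j ≤ p * ν j := Nat.mul_le_mul_left p hj
        omega
      have hsub : μ + p • ν - p • m = μ + p • (ν - m) := by
        ext j
        have hj : m j ≤ ν j := Finsupp.le_def.mp h j
        simp only [Finsupp.tsub_apply, Finsupp.add_apply, Finsupp.smul_apply, smul_eq_mul]
        have h1 : p * m j ≤ p * ν j := Nat.mul_le_mul_left p hj
        have h2 : p * (ν j - m j) = p * ν j - p * m j := Nat.mul_sub ..
        omega
      rw [if_pos h, if_pos hle, hsub, mul_comm (coeff _ _) (a ^ p), crd_mul_pow,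
        mul_comm a _]
    · have hnle : ¬ (p • m ≤ μ + p • ν) := by
        intro hc
        apply h
        rw [Finsupp.le_def]
        intro j
        have hj := Finsupp.le_def.mp hc j
        simp only [Finsupp.smul_apply, smul_eq_mul, Finsupp.add_apply] at hj
        have hμj := hμ j
        by_contra hlt
        push_neg at hlt
        have h1 : ν j + 1 ≤ m j := hlt
        have h2 : p * (ν j + 1) ≤ p * m j := Nat.mul_le_mul_left p h1
        have h3 : p * (ν j + 1) = p * ν j + p := by ring
        omega
      rw [if_neg h, if_neg hnle, crd_zero]
  | add q r hq hr =>
    have hpow : (q + r) ^ p = q ^ p + r ^ p := add_pow_char _ _ _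
    rw [hpow, mul_add, Psi_add hμ, hq, hr, mul_add]

lemma Psi_totalDegree {μ : Fin n →₀ ℕ} (hμ : ∀ j, μ j < p) (l : PIdx K p)
    (f : MvPolynomial (Fin n) K) :
    p * (Psi μ l f).totalDegree ≤ f.totalDegree := by
  have h : (Psi μ l f).totalDegree ≤ f.totalDegree / p := by
    rw [totalDegree]
    apply Finset.sup_le
    intro ν hν
    rw [Nat.le_div_iff_mul_le hp.out.pos]
    have hc : coeff ν (Psi μ l f) ≠ 0 := mem_support_iff.mp hν
    rw [coeff_Psi hμ] at hc
    have hc2 : coeff (μ + p • ν) f ≠ 0 := fun h0 => hc (by rw [h0, crd_zero])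
    have hmem := le_totalDegree (mem_support_iff.mpr hc2)
    refine le_trans ?_ hmem
    have h1 : ((μ + p • ν).sum fun _ e => e) = (μ.sum fun _ e => e) + ((p • ν).sum fun _ e => e) :=
      Finsupp.sum_add_index' (fun _ => rfl) (fun _ _ _ => rfl)
    have h2 : ((p • ν).sum fun _ e => e) = p * (ν.sum fun _ e => e) := by
      rw [Finsupp.sum_smul_index (fun _ => rfl), Finsupp.sum, Finsupp.sum, Finset.mul_sum]
    rw [h1, h2, mul_comm]
    exact Nat.le_add_left _ _
  calc p * (Psi μ l f).totalDegree ≤ p * (f.totalDegree / p) :=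
        Nat.mul_le_mul_left p h
    _ ≤ f.totalDegree := Nat.mul_div_le _ _

lemma P1 (f : MvPolynomial (Fin n) K) (A : Finset (Fin n →₀ ℕ)) (S : Finset (PIdx K p))
    (hAlt : ∀ μ ∈ A, ∀ j, μ j < p)
    (hA : ∀ m ∈ f.support, res p m ∈ A)
    (hS : ∀ m ∈ f.support, ((PBasis K p).repr (coeff m f)).support ⊆ S) :
    f = ∑ μ ∈ A, ∑ l ∈ S, monomial μ (l : K) * (Psi μ l f) ^ p := by
  classical
  conv_lhs => rw [f.as_sum]
  have key : ∀ m ∈ f.support,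
      monomial m (coeff m f) = ∑ μ ∈ A, ∑ l ∈ S, monomial μ (l : K) *
        (Psi μ l (monomial m (coeff m f))) ^ p := by
    intro m hm
    have hAm := hA m hm
    have hSm := hS m hm
    rw [Finset.sum_eq_single_of_mem (res p m) hAm]
    · have hres : ∀ j, res p m j < p := fun j => res_lt m j
      have : ∀ l ∈ S, monomial (res p m) (l : K) *
          (Psi (res p m) l (monomial m (coeff m f))) ^ p
          = monomial m ((crd (coeff m f) l) ^ p * (l : K)) := by
        intro l _
        rw [Psi_monomial hres, if_pos rfl, monomial_pow, monomial_mul]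
        congr 1
        · conv_rhs => rw [← res_add_quo (p := p) m]
        · ring
      rw [Finset.sum_congr rfl this, ← map_sum (monomial m), sum_crd_pow hSm]
    · intro μ hμA hne
      have hμlt := hAlt μ hμA
      have : ∀ l ∈ S, monomial μ (l : K) *
          (Psi μ l (monomial m (coeff m f))) ^ p = 0 := by
        intro l _
        rw [Psi_monomial hμlt, if_neg hne, zero_pow hp.out.ne_zero, mul_zero]
      rw [Finset.sum_congr rfl this, Finset.sum_const_zero]
  rw [Finset.sum_congr rfl key]
  rw [Finset.sum_comm]
  apply Finset.sum_congr rfl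
  intro μ hμA
  rw [Finset.sum_comm]
  apply Finset.sum_congr rfl
  intro l _
  rw [← Finset.mul_sum, ← sum_pow_char, ← Psi_sum (hAlt μ hμA) l, ← f.as_sum]

end Psi

section Vec
variable {K : Type*} [Field K] {p : ℕ} [CharP K p] [hp : Fact p.Prime] {n β : ℕ}

/-- entrywise application of `Psi` -/
noncomputable def PsiVec (μ : Fin n →₀ ℕ) (l : PIdx K p)
    (v : Fin β → MvPolynomial (Fin n) K) : Fin β → MvPolynomial (Fin n) K :=
  fun i => Psi μ l (v i)

lemma PsiVec_mem_of_mem_bracketPower {μ : Fin n →₀ ℕ} (hμ : ∀ j, μ j < p) (l : PIdx K p)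
    {W : Submodule (MvPolynomial (Fin n) K) (Fin β → MvPolynomial (Fin n) K)}
    {v : Fin β → MvPolynomial (Fin n) K} (hv : v ∈ bracketPower p W) :
    PsiVec μ l v ∈ W := by
  classical
  rw [bracketPower] at hv
  obtain ⟨N, c, g, hsum⟩ := Submodule.mem_span_set'.mp hv
  choose w hwW hweq using fun k => (g k).2
  have hvi : ∀ i, v i = ∑ k, c k * (w k i) ^ p := by
    intro i
    rw [← hsum]
    rw [Finset.sum_apply]
    apply Finset.sum_congr rfl
    intro k _
    have : ((g k : Fin β → MvPolynomial (Fin n) K)) i = (w k i) ^ p := by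
      rw [← hweq k]
    rw [Pi.smul_apply, smul_eq_mul, this]
  have key : PsiVec μ l v = ∑ k, (Psi μ l (c k)) • w k := by
    funext i
    rw [PsiVec, hvi i, Psi_sum hμ]
    rw [Finset.sum_apply]
    apply Finset.sum_congr rfl
    intro k _
    rw [Pi.smul_apply, smul_eq_mul, Psi_mul_pow hμ]
  rw [key]
  exact Submodule.sum_smul_mem W _ (fun k _ => hwW k)

lemma mem_bracketPower_of_PsiVec_mem
    {W : Submodule (MvPolynomial (Fin n) K) (Fin β → MvPolynomial (Fin n) K)}
    (v : Fin β → MvPolynomial (Fin n) K)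
    (h : ∀ (μ : Fin n →₀ ℕ) (l : PIdx K p), (∀ j, μ j < p) → PsiVec μ l v ∈ W) :
    v ∈ bracketPower p W := by
  classical
  set A : Finset (Fin n →₀ ℕ) :=
    Finset.biUnion Finset.univ (fun i : Fin β => (v i).support.image (res p)) with hA
  set S : Finset (PIdx K p) :=
    Finset.biUnion Finset.univ (fun i : Fin β =>
      Finset.biUnion (v i).support
        (fun m => ((PBasis K p).repr (coeff m (v i))).support)) with hS
  have hAlt : ∀ μ ∈ A, ∀ j, μ j < p := by
    intro μ hμ j
    rw [hA] at hμ
    obtain ⟨i, _, hi⟩ := Finset.mem_biUnion.mp hμ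
    obtain ⟨m, _, hm⟩ := Finset.mem_image.mp hi
    rw [← hm]
    exact res_lt m j
  have hvi : ∀ i, v i = ∑ μ ∈ A, ∑ l ∈ S, monomial μ (l : K) * (Psi μ l (v i)) ^ p := by
    intro i
    apply P1 (v i) A S hAlt
    · intro m hm
      exact Finset.mem_biUnion.mpr ⟨i, Finset.mem_univ i,
        Finset.mem_image.mpr ⟨m, hm, rfl⟩⟩
    · intro m hm
      intro x hx
      exact Finset.mem_biUnion.mpr ⟨i, Finset.mem_univ i,
        Finset.mem_biUnion.mpr ⟨m, hm, hx⟩⟩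
  have hveq : v = ∑ μ ∈ A, ∑ l ∈ S,
      (monomial μ (l : K)) • (fun i => (PsiVec μ l v i) ^ p) := by
    funext i
    rw [hvi i, Finset.sum_apply]
    apply Finset.sum_congr rfl
    intro μ _
    rw [Finset.sum_apply]
    apply Finset.sum_congr rfl
    intro l _
    rw [Pi.smul_apply, smul_eq_mul]
    rfl
  rw [hveq]
  apply Submodule.sum_mem
  intro μ hμA
  apply Submodule.sum_mem
  intro l _
  apply Submodule.smul_mem
  apply Submodule.subset_span
  exact ⟨PsiVec μ l v, h μ l (hAlt μ hμA), rfl⟩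

/-- the canonical description of the least `W` with `span S ⊆ W^{[p]}` -/
lemma least_bracketPower_eq {S : Set (Fin β → MvPolynomial (Fin n) K)}
    {Wstar : Submodule (MvPolynomial (Fin n) K) (Fin β → MvPolynomial (Fin n) K)}
    (h : IsLeast {W | Submodule.span (MvPolynomial (Fin n) K) S ≤ bracketPower p W} Wstar) :
    Wstar = Submodule.span (MvPolynomial (Fin n) K)
      {w | ∃ v ∈ S, ∃ μ : Fin n →₀ ℕ, ∃ l : PIdx K p, (∀ j, μ j < p) ∧ w = PsiVec μ l v} := by
  apply h.unique
  constructor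
  · rw [Set.mem_setOf_eq, Submodule.span_le]
    intro v hv
    apply mem_bracketPower_of_PsiVec_mem
    intro μ l hμ
    exact Submodule.subset_span ⟨v, hv, μ, l, hμ, rfl⟩
  · intro W hW
    rw [Set.mem_setOf_eq] at hW
    rw [Submodule.span_le]
    rintro w ⟨v, hv, μ, l, hμ, rfl⟩
    exact PsiVec_mem_of_mem_bracketPower hμ l (hW (Submodule.subset_span hv))

end Vec

/-- **Statement 10.** Let `R = K[x₁,…,xₙ]` with `K` a field of prime characteristic `p`, and
let `U` be a `β×β` matrix over `R` all of whose entries have total degree at most `δ`.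
Define `L₀ = R^β` and let `L_{j+1}` be the smallest submodule `W` with `U·L_j ⊆ W^{[p]}`.
Then for every `e ≥ 1`, `L_e` is generated by vectors all of whose entries have total degree
at most `δ/(p-1)`, i.e. by its elements `v` with `(p-1)·deg(vᵢ) ≤ δ` for every coordinate. -/
theorem Le_generated_in_bounded_degree
    {K : Type*} [Field K] {p n β : ℕ} (hp : p.Prime) [CharP K p]
    (δ : ℕ)
    (U : Matrix (Fin β) (Fin β) (MvPolynomial (Fin n) K))
    (hU : ∀ i j, (U i j).totalDegree ≤ δ)
    (L : ℕ → Submodule (MvPolynomial (Fin n) K) (Fin β → MvPolynomial (Fin n) K))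
    (hL0 : L 0 = ⊤)
    (hL : ∀ j : ℕ,
      IsLeast {W : Submodule (MvPolynomial (Fin n) K) (Fin β → MvPolynomial (Fin n) K) |
        Submodule.map (Matrix.mulVecLin U) (L j) ≤ bracketPower p W} (L (j + 1))) :
    ∀ e : ℕ, 1 ≤ e →
      L e = Submodule.span (MvPolynomial (Fin n) K)
        {v : Fin β → MvPolynomial (Fin n) K |
          v ∈ L e ∧ ∀ i, (p - 1) * (v i).totalDegree ≤ δ} := by
  haveI := Fact.mk hp
  have hp1 : 0 < p - 1 := by have := hp.two_le; omega
  have main : ∀ e : ℕ, ∃ G : Set (Fin β → MvPolynomial (Fin n) K),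
      L e = Submodule.span (MvPolynomial (Fin n) K) G ∧
        ∀ v ∈ G, ∀ i, (p - 1) * (v i).totalDegree ≤ δ := by
    intro e
    induction e with
    | zero =>
      refine ⟨Set.range ⇑(Pi.basisFun (MvPolynomial (Fin n) K) (Fin β)), ?_, ?_⟩
      · rw [hL0, Module.Basis.span_eq]
      · rintro v ⟨i, rfl⟩ j
        rw [Pi.basisFun_apply]
        by_cases h : j = i
        · subst h
          simp
        · rw [Pi.single_apply, if_neg h]
          simp
    | succ e ih =>
      obtain ⟨G, hG, hGd⟩ := ih
      have hmap : Submodule.map (Matrix.mulVecLin U) (L e)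
          = Submodule.span (MvPolynomial (Fin n) K) ((Matrix.mulVecLin U) '' G) := by
        rw [hG, Submodule.map_span]
      have hleast := hL e
      rw [hmap] at hleast
      refine ⟨_, least_bracketPower_eq hleast, ?_⟩
      rintro w ⟨v, ⟨g, hgG, rfl⟩, μ, l, hμ, rfl⟩ i
      -- degree bound for the generators
      have hUg : (Matrix.mulVecLin U) g i = ∑ j, U i j * g j := by
        simp [Matrix.mulVecLin_apply, Matrix.mulVec, dotProduct]
      have hdeg1 : ((Matrix.mulVecLin U) g i).totalDegree ≤ (p * δ) / (p - 1) := by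
        rw [hUg]
        apply le_trans (totalDegree_finset_sum _ _)
        apply Finset.sup_le
        intro j _
        rw [Nat.le_div_iff_mul_le hp1]
        have h1 : (U i j * g j).totalDegree ≤ δ + (g j).totalDegree :=
          le_trans (totalDegree_mul _ _) (Nat.add_le_add_right (hU i j) _)
        have h2 : (p - 1) * (g j).totalDegree ≤ δ := hGd g hgG j
        calc (U i j * g j).totalDegree * (p - 1) ≤ (δ + (g j).totalDegree) * (p - 1) :=
              Nat.mul_le_mul_right _ h1
          _ = (p - 1) * δ + (p - 1) * (g j).totalDegree := by ring
          _ ≤ (p - 1) * δ + δ := Nat.add_le_add_left h2 _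
          _ ≤ p * δ := by
              have : (p - 1) * δ + δ = (p - 1 + 1) * δ := by ring
              rw [this]
              apply Nat.mul_le_mul_right
              omega
      have hdeg2 : p * (PsiVec μ l ((Matrix.mulVecLin U) g) i).totalDegree
          ≤ (Matrix.mulVecLin U g i).totalDegree := Psi_totalDegree hμ l _
      -- conclude
      have h3 : (p - 1) * ((Matrix.mulVecLin U) g i).totalDegree ≤ p * δ := by
        calc (p - 1) * ((Matrix.mulVecLin U) g i).totalDegree
            ≤ (p - 1) * ((p * δ) / (p - 1)) := Nat.mul_le_mul_left _ hdeg1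
          _ ≤ p * δ := Nat.mul_div_le _ _
      have h4 : p * ((p - 1) * (PsiVec μ l ((Matrix.mulVecLin U) g) i).totalDegree)
          ≤ p * δ := by
        calc p * ((p - 1) * (PsiVec μ l ((Matrix.mulVecLin U) g) i).totalDegree)
            = (p - 1) * (p * (PsiVec μ l ((Matrix.mulVecLin U) g) i).totalDegree) := by ring
          _ ≤ (p - 1) * ((Matrix.mulVecLin U) g i).totalDegree :=
              Nat.mul_le_mul_left _ hdeg2
          _ ≤ p * δ := h3
      exact Nat.le_of_mul_le_mul_left h4 hp.pos
  intro e _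
  obtain ⟨G, hG, hGd⟩ := main e
  apply le_antisymm
  · conv_lhs => rw [hG]
    apply Submodule.span_le.mpr
    intro v hv
    apply Submodule.subset_span
    refine ⟨?_, hGd v hv⟩
    rw [hG]
    exact Submodule.subset_span hv
  · apply Submodule.span_le.mpr
    intro v hv
    exact hv.1
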